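/- Let p, q ∈ (0,1/2). In the ε-teaching model with parameter ε ∈ (0,1), let Θ̂_n be the student's ε-majority estimate, and Err_n(ε) = P(Θ̂_n ≠ +1). Then for each fixed ε ∈ (0,1), lim_{n→∞} −(1/n) log Err_n(ε) = min( (1−ε)·D(1/2‖p), ε·D(1/2‖q) ); consequently, the learning rate optimized over ε ∈ (0,1) equals sup_{ε∈(0,1)} min( (1−ε)·D(1/2‖p), ε·D(1/2‖q) ) = D(1/2‖p)·D(1/2‖q) / ( D(1/2‖p) + D(1/2‖q) ), attained at ε = D(1/2‖p)/(D(1/2‖p)+D(1/2‖q)). -/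

import Mathlib

open MeasureTheory ProbabilityTheory Filter

noncomputable section

/-- Kullback–Leibler divergence `D(1/2 ‖ p)` between Bernoulli(1/2) and Bernoulli(p). -/
def Dhalf (p : ℝ) : ℝ := (1/2) * Real.log ((1/2)/p) + (1/2) * Real.log ((1/2)/(1-p))

variable {Ω : Type*} [MeasurableSpace Ω]

/-- The teacher's majority estimate `Θ̃` based on the observations `Y_1, …, Y_m`:
`+1` iff `#{1 ≤ j ≤ m : Y_j = +1} ≥ m/2`. -/
def thetaTilde (Y : ℕ → Ω → ℤ) (m : ℕ) (ω : Ω) : ℤ :=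
  if (m : ℝ)/2 ≤ (((Finset.Icc 1 m).filter fun j => Y j ω = 1).card : ℝ) then 1 else -1

/-- The error event of the ε-teaching + ε-majority-learning strategy at horizon `n`:
for `⌈(1−ε)n⌉ ≤ i ≤ n` the teacher transmits `Θ̃` (the majority over `Y_1,…,Y_{⌊(1−ε)n⌋}`),
the student receives `Z_i = X̂_i · N_i` and estimates `Θ̂_n = +1` iff
`#{⌈(1−ε)n⌉ ≤ i ≤ n : Z_i = +1} ≥ ⌊εn⌋/2`; the event is `Θ̂_n ≠ +1`. -/
def epsErr (Y N : ℕ → Ω → ℤ) (ε : ℝ) (n : ℕ) : Set Ω :=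
  {ω | ¬ ((⌊ε * (n:ℝ)⌋₊ : ℝ)/2 ≤
      (((Finset.Icc ⌈(1-ε) * (n:ℝ)⌉₊ n).filter
        fun i => thetaTilde Y ⌊(1-ε) * (n:ℝ)⌋₊ ω * N i ω = 1).card : ℝ))}

section Helpers
open Finset



lemma flip_val {x t : ℤ} (hx : x = 1 ∨ x = -1) (ht : t = 1 ∨ t = -1) (h : ¬ x = t) :
    x = -t := by rcases hx with h1|h1 <;> rcases ht with h2|h2 <;> omega

lemma measZ (s : Set ℤ) : MeasurableSet s := MeasurableSpace.measurableSet_top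

lemma tail_measure (μ : Measure Ω) [IsProbabilityMeasure μ] (ξ : ℕ → Ω → ℤ) (s : Finset ℕ)
    (t : ℤ) (ht : t = 1 ∨ t = -1) (r : ℝ) (hr0 : 0 ≤ r) (hr1 : r ≤ 1)
    (hmeas : ∀ i, Measurable (ξ i))
    (hrange : ∀ i ω, ξ i ω = 1 ∨ ξ i ω = -1)
    (hdist : ∀ i ∈ s, μ {ω | ξ i ω = t} = ENNReal.ofReal r)
    (hind : ∀ g : ℕ → Set ℤ, μ (⋂ i ∈ s, ξ i ⁻¹' g i) = ∏ i ∈ s, μ (ξ i ⁻¹' g i))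
    (c : ℝ) :
    μ {ω | c ≤ (((s.filter fun i => ξ i ω = t).card : ℝ))}
      = ENNReal.ofReal (∑ T ∈ s.powerset.filter (fun T => c ≤ (T.card : ℝ)),
          r ^ T.card * (1 - r) ^ (s.card - T.card)) := by
  classical
  have hfil : ∀ (T : Finset ℕ), T ⊆ s →
      ∀ ω ∈ ⋂ i ∈ s, ξ i ⁻¹' {if i ∈ T then t else -t},
      (s.filter fun i => ξ i ω = t) = T := by
    intro T hTs ω hω
    have hω' : ∀ i ∈ s, ξ i ω ∈ ({if i ∈ T then t else -t} : Set ℤ) :=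
      fun i hi => Set.mem_iInter₂.1 hω i hi
    ext i
    simp only [mem_filter]
    constructor
    · rintro ⟨his, hit⟩
      have := hω' i his
      simp only [Set.mem_singleton_iff] at this
      by_contra hiT
      rw [if_neg hiT] at this
      rcases ht with h2|h2 <;> omega
    · intro hiT
      have his := hTs hiT
      have := hω' i his
      rw [if_pos hiT] at this
      simp only [Set.mem_singleton_iff] at this
      exact ⟨his, this⟩
  have hev : {ω | c ≤ (((s.filter fun i => ξ i ω = t).card : ℝ))}
      = ⋃ T ∈ s.powerset.filter (fun T => c ≤ (T.card : ℝ)),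
          ⋂ i ∈ s, ξ i ⁻¹' {if i ∈ T then t else -t} := by
    ext ω
    simp only [Set.mem_setOf_eq, Set.mem_iUnion, mem_filter, mem_powerset]
    constructor
    · intro hc
      refine ⟨s.filter fun i => ξ i ω = t, ⟨filter_subset _ _, hc⟩, ?_⟩
      refine Set.mem_iInter₂.2 fun i hi => ?_
      simp only [Set.mem_preimage, Set.mem_singleton_iff]
      by_cases hit : ξ i ω = t
      · rw [if_pos (mem_filter.2 ⟨hi, hit⟩)]; exact hit
      · rw [if_neg (show i ∉ s.filter (fun i => ξ i ω = t) from fun hmem => hit (mem_filter.1 hmem).2)]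
        exact flip_val (hrange i ω) ht hit
    · rintro ⟨T, hTP, hωT⟩
      rw [hfil T hTP.1 ω hωT]
      exact hTP.2
  have hmeaspat : ∀ T ∈ s.powerset.filter (fun T => c ≤ (T.card : ℝ)),
      MeasurableSet (⋂ i ∈ s, ξ i ⁻¹' {if i ∈ T then t else -t}) :=
    fun T _ => MeasurableSet.biInter s.countable_toSet fun i _ => (hmeas i) (measZ _)
  have hdisj : ((s.powerset.filter (fun T => c ≤ (T.card : ℝ)) : Finset (Finset ℕ)) :
      Set (Finset ℕ)).PairwiseDisjoint
      (fun T => ⋂ i ∈ s, ξ i ⁻¹' {if i ∈ T then t else -t}) := by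
    intro T hT T' hT' hne
    simp only [coe_filter, Set.mem_setOf_eq, mem_powerset] at hT hT'
    refine Set.disjoint_left.2 fun ω h1 h2 => hne ?_
    rw [← hfil T hT.1 ω h1, hfil T' hT'.1 ω h2]
  have hpatmeas : ∀ T ∈ s.powerset.filter (fun T => c ≤ (T.card : ℝ)),
      μ (⋂ i ∈ s, ξ i ⁻¹' {if i ∈ T then t else -t})
        = ENNReal.ofReal (r ^ T.card * (1 - r) ^ (s.card - T.card)) := by
    intro T hT
    simp only [mem_filter, mem_powerset] at hT
    rw [hind (fun i => {if i ∈ T then t else -t})]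
    have hfac : ∀ i ∈ s, μ (ξ i ⁻¹' {if i ∈ T then t else -t})
        = ENNReal.ofReal (if i ∈ T then r else 1 - r) := by
      intro i hi
      have hmeast : MeasurableSet {ω | ξ i ω = t} :=
        hmeas i (measZ ({t} : Set ℤ))
      by_cases hiT : i ∈ T
      · rw [if_pos hiT, if_pos hiT, ← hdist i hi]
        rfl
      · rw [if_neg hiT, if_neg hiT]
        have hcompl : ξ i ⁻¹' {-t} = {ω | ξ i ω = t}ᶜ := by
          ext ω
          simp only [Set.mem_preimage, Set.mem_singleton_iff, Set.mem_compl_iff,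
            Set.mem_setOf_eq]
          constructor
          · intro h h'; rcases ht with h2|h2 <;> omega
          · intro h; exact flip_val (hrange i ω) ht h
        rw [hcompl, measure_compl hmeast (measure_ne_top μ _), hdist i hi,
          measure_univ, ← ENNReal.ofReal_one, ← ENNReal.ofReal_sub _ hr0]
    rw [Finset.prod_congr rfl hfac, ← ENNReal.ofReal_prod_of_nonneg
      (fun i _ => by split <;> [exact hr0; linarith])]
    congr 1
    rw [← Finset.prod_filter_mul_prod_filter_not s (· ∈ T)]
    have h1 : s.filter (· ∈ T) = T := by
      ext i; simp only [mem_filter]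
      exact ⟨fun h => h.2, fun h => ⟨hT.1 h, h⟩⟩
    have h2 : (s.filter (fun i => ¬ i ∈ T)).card = s.card - T.card := by
      rw [Finset.filter_not, card_sdiff_of_subset (filter_subset _ _), h1]
    calc (∏ i ∈ s.filter (· ∈ T), (if i ∈ T then r else 1 - r)) *
          ∏ i ∈ s.filter (fun i => ¬ i ∈ T), (if i ∈ T then r else 1 - r)
        = (∏ _i ∈ s.filter (· ∈ T), r) * ∏ _i ∈ s.filter (fun i => ¬ i ∈ T), (1-r) := by
          congr 1
          · exact Finset.prod_congr rfl fun i hi => if_pos (mem_filter.1 hi).2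
          · exact Finset.prod_congr rfl fun i hi => if_neg (mem_filter.1 hi).2
      _ = r ^ T.card * (1 - r) ^ (s.card - T.card) := by
          rw [Finset.prod_const, Finset.prod_const, h1, h2]
  rw [hev, measure_biUnion_finset hdisj hmeaspat, Finset.sum_congr rfl hpatmeas,
    ENNReal.ofReal_sum_of_nonneg
      (fun T _ => mul_nonneg (pow_nonneg hr0 _) (pow_nonneg (by linarith) _))]


lemma term_eq (r : ℝ) (h1r : 0 < 1 - r) {k m : ℕ} (hk : k ≤ m) :
    r ^ k * (1 - r) ^ (m - k) = (1 - r) ^ m * (r / (1 - r)) ^ (k : ℝ) := by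
  rw [Real.rpow_natCast, div_pow]
  have h : (1 - r) ^ (m - k) = (1 - r) ^ m / (1 - r) ^ k := by
    rw [eq_div_iff (pow_ne_zero _ (ne_of_gt h1r)), ← pow_add, Nat.sub_add_cancel hk]
  rw [h]; ring

lemma tail_sum_le (s : Finset ℕ) (r c : ℝ) (hr0 : 0 < r) (hr1 : r < 1/2) (hc : 0 ≤ c) :
    ∑ T ∈ s.powerset.filter (fun T => c ≤ (T.card : ℝ)),
      r ^ T.card * (1 - r) ^ (s.card - T.card)
    ≤ (2 * (1 - r)) ^ s.card * (r / (1 - r)) ^ c := by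
  have h1r : 0 < 1 - r := by linarith
  have hbase0 : 0 < r / (1 - r) := div_pos hr0 h1r
  have hbase1 : r / (1 - r) ≤ 1 := (div_le_one h1r).2 (by linarith)
  have key : ∀ T ∈ s.powerset.filter (fun T => c ≤ (T.card : ℝ)),
      r ^ T.card * (1 - r) ^ (s.card - T.card)
        ≤ (1 - r) ^ s.card * (r / (1 - r)) ^ c := by
    intro T hT
    rw [mem_filter, mem_powerset] at hT
    rw [term_eq r h1r (card_le_card hT.1)]
    exact mul_le_mul_of_nonneg_left
      (Real.rpow_le_rpow_of_exponent_ge hbase0 hbase1 hT.2) (by positivity)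
  calc ∑ T ∈ s.powerset.filter (fun T => c ≤ (T.card : ℝ)),
        r ^ T.card * (1 - r) ^ (s.card - T.card)
      ≤ (s.powerset.filter (fun T => c ≤ (T.card : ℝ))).card •
          ((1 - r) ^ s.card * (r / (1 - r)) ^ c) := Finset.sum_le_card_nsmul _ _ _ key
    _ = ((s.powerset.filter (fun T => c ≤ (T.card : ℝ))).card : ℝ) *
          ((1 - r) ^ s.card * (r / (1 - r)) ^ c) := by rw [nsmul_eq_mul]
    _ ≤ (2 ^ s.card : ℝ) * ((1 - r) ^ s.card * (r / (1 - r)) ^ c) := by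
        apply mul_le_mul_of_nonneg_right _ (by positivity)
        have := card_le_card (filter_subset (fun T => c ≤ (T.card : ℝ)) s.powerset)
        rw [card_powerset] at this
        exact_mod_cast this
    _ = (2 * (1 - r)) ^ s.card * (r / (1 - r)) ^ c := by rw [mul_pow]; ring
  
lemma tail_sum_ge (s : Finset ℕ) (r c : ℝ) (hr0 : 0 ≤ r) (hr1 : r ≤ 1) (k₀ : ℕ)
    (hck : c ≤ (k₀ : ℝ)) :
    (s.card.choose k₀ : ℝ) * (r ^ k₀ * (1 - r) ^ (s.card - k₀))
      ≤ ∑ T ∈ s.powerset.filter (fun T => c ≤ (T.card : ℝ)),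
          r ^ T.card * (1 - r) ^ (s.card - T.card) := by
  have hsub : Finset.powersetCard k₀ s ⊆ s.powerset.filter (fun T => c ≤ (T.card : ℝ)) := by
    intro T hT
    rw [Finset.mem_powersetCard] at hT
    rw [mem_filter, mem_powerset]
    exact ⟨hT.1, by rw [hT.2]; exact hck⟩
  calc (s.card.choose k₀ : ℝ) * (r ^ k₀ * (1 - r) ^ (s.card - k₀))
      = ∑ T ∈ Finset.powersetCard k₀ s, r ^ T.card * (1 - r) ^ (s.card - T.card) := by
        rw [Finset.sum_congr rfl (fun T hT => by
          rw [(Finset.mem_powersetCard.1 hT).2]), Finset.sum_const,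
          Finset.card_powersetCard, nsmul_eq_mul]
    _ ≤ _ := Finset.sum_le_sum_of_subset_of_nonneg hsub
        (fun T _ _ => mul_nonneg (pow_nonneg hr0 _) (pow_nonneg (by linarith) _))

lemma choose_step (m k : ℕ) (h : k < m) : m.choose k ≤ (m + 1) * m.choose (k + 1) := by
  have h1 : m.choose (k+1) * (k+1) = m.choose k * (m - k) := Nat.choose_succ_right_eq m k
  have h2 : 1 ≤ m - k := by omega
  calc m.choose k ≤ m.choose k * (m - k) := Nat.le_mul_of_pos_right _ (by omega)
    _ = m.choose (k+1) * (k+1) := h1.symm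
    _ ≤ m.choose (k+1) * (m+1) := Nat.mul_le_mul_left _ (by omega)
    _ = (m+1) * m.choose (k+1) := Nat.mul_comm _ _

lemma choose_mid (m : ℕ) : 2 ^ m ≤ (m + 1) * m.choose (m / 2) := by
  calc 2 ^ m = ∑ j ∈ Finset.range (m + 1), m.choose j := (Nat.sum_range_choose m).symm
    _ ≤ (Finset.range (m+1)).card • m.choose (m / 2) :=
        Finset.sum_le_card_nsmul _ _ _ (fun j _ => Nat.choose_le_middle j m)
    _ = (m + 1) * m.choose (m / 2) := by rw [Finset.card_range, smul_eq_mul]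

lemma choose_lb (m k₀ : ℕ) (h1 : m / 2 ≤ k₀) (h2 : k₀ ≤ m) (h3 : k₀ ≤ m / 2 + 2) :
    2 ^ m ≤ (m + 1) ^ 3 * m.choose k₀ := by
  have base := choose_mid m
  have pad : ∀ j c : ℕ, 2 ^ m ≤ (m+1)^j * c → j ≤ 3 → 2 ^ m ≤ (m+1)^3 * c := by
    intro j c h hj
    calc 2 ^ m ≤ (m+1)^j * c := h
      _ ≤ (m+1)^3 * c := Nat.mul_le_mul_right _ (Nat.pow_le_pow_right (by omega) hj)
  rcases (by omega : k₀ = m/2 ∨ k₀ = m/2 + 1 ∨ k₀ = m/2 + 2) with h|h|h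
  · subst h; exact pad 1 _ (by simpa using base) (by omega)
  · subst h
    have hstep := choose_step m (m/2) (by omega)
    refine pad 2 _ ?_ (by omega)
    calc 2^m ≤ (m+1) * m.choose (m/2) := base
      _ ≤ (m+1) * ((m+1) * m.choose (m/2+1)) := Nat.mul_le_mul_left _ hstep
      _ = (m+1)^2 * m.choose (m/2+1) := by ring
  · subst h
    have hstep := choose_step m (m/2) (by omega)
    have hstep2 := choose_step m (m/2+1) (by omega)
    calc 2^m ≤ (m+1) * m.choose (m/2) := base
      _ ≤ (m+1) * ((m+1) * m.choose (m/2+1)) := Nat.mul_le_mul_left _ hstep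
      _ ≤ (m+1) * ((m+1) * ((m+1) * m.choose (m/2+2))) :=
          Nat.mul_le_mul_left _ (Nat.mul_le_mul_left _ hstep2)
      _ = (m+1)^3 * m.choose (m/2+2) := by ring




lemma measPiZ {α : Type*} [Fintype α] (B : Set (α → ℤ)) : MeasurableSet B := by
  have hsing : ∀ v : α → ℤ, MeasurableSet ({v} : Set (α → ℤ)) := by
    intro v
    have h : ({v} : Set (α → ℤ)) = ⋂ i, (fun w : α → ℤ => w i) ⁻¹' {v i} := by
      ext w
      simp [funext_iff, Set.mem_iInter, eq_comm]
    rw [h]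
    exact MeasurableSet.iInter fun i =>
      measurable_pi_apply i (MeasurableSpace.measurableSet_top)
  have hB : B = ⋃ v ∈ B, {v} := by simp
  rw [hB]
  exact MeasurableSet.biUnion (Set.to_countable _) (fun v _ => hsing v)

lemma card_univ_filter {α : Type*} [DecidableEq α] (t : Finset α) (P : α → Prop)
    [DecidablePred P] :
    (Finset.univ.filter fun i : ↥t => P ↑i).card = (t.filter P).card := by
  rw [Finset.univ_eq_attach, Finset.filter_attach, Finset.card_map, Finset.card_attach]

lemma block_indep (μ : Measure Ω) (Y N : ℕ → Ω → ℤ)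
    (hindep : iIndepFun (m := fun _ => (inferInstance : MeasurableSpace ℤ)) (Sum.elim Y N) μ) :
    (∀ (s : Finset ℕ) (g : ℕ → Set ℤ),
        μ (⋂ j ∈ s, Y j ⁻¹' g j) = ∏ j ∈ s, μ (Y j ⁻¹' g j)) ∧
    (∀ (s : Finset ℕ) (g : ℕ → Set ℤ),
        μ (⋂ j ∈ s, N j ⁻¹' g j) = ∏ j ∈ s, μ (N j ⁻¹' g j)) := by
  constructor
  · intro s g
    have h := hindep.meas_biInter (S := s.map ⟨Sum.inl, Sum.inl_injective⟩)
      (s := fun i => Sum.elim Y N i ⁻¹' Sum.elim g (fun _ => Set.univ) i)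
      (fun i _ => ⟨_, MeasurableSpace.measurableSet_top, rfl⟩)
    have h1 : (⋂ i ∈ s.map ⟨Sum.inl, Sum.inl_injective⟩,
        Sum.elim Y N i ⁻¹' Sum.elim g (fun _ => Set.univ) i) = ⋂ j ∈ s, Y j ⁻¹' g j := by
      ext ω
      simp only [Set.mem_iInter, Finset.mem_map, Function.Embedding.coeFn_mk]
      constructor
      · intro hh j hj
        exact hh (Sum.inl j) ⟨j, hj, rfl⟩
      · rintro hh i ⟨j, hj, rfl⟩
        exact hh j hj
    have h2 : (∏ i ∈ s.map ⟨Sum.inl, Sum.inl_injective⟩,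
        μ (Sum.elim Y N i ⁻¹' Sum.elim g (fun _ => Set.univ) i))
        = ∏ j ∈ s, μ (Y j ⁻¹' g j) := Finset.prod_map _ _ _
    rw [h1, h2] at h
    exact h
  · intro s g
    have h := hindep.meas_biInter (S := s.map ⟨Sum.inr, Sum.inr_injective⟩)
      (s := fun i => Sum.elim Y N i ⁻¹' Sum.elim (fun _ => Set.univ) g i)
      (fun i _ => ⟨_, MeasurableSpace.measurableSet_top, rfl⟩)
    have h1 : (⋂ i ∈ s.map ⟨Sum.inr, Sum.inr_injective⟩,
        Sum.elim Y N i ⁻¹' Sum.elim (fun _ => Set.univ) g i) = ⋂ j ∈ s, N j ⁻¹' g j := by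
      ext ω
      simp only [Set.mem_iInter, Finset.mem_map, Function.Embedding.coeFn_mk]
      constructor
      · intro hh j hj
        exact hh (Sum.inr j) ⟨j, hj, rfl⟩
      · rintro hh i ⟨j, hj, rfl⟩
        exact hh j hj
    have h2 : (∏ i ∈ s.map ⟨Sum.inr, Sum.inr_injective⟩,
        μ (Sum.elim Y N i ⁻¹' Sum.elim (fun _ => Set.univ) g i))
        = ∏ j ∈ s, μ (N j ⁻¹' g j) := Finset.prod_map _ _ _
    rw [h1, h2] at h
    exact h




lemma Dhalf_eq {r : ℝ} (h0 : 0 < r) (h1 : r < 1) :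
    Dhalf r = -(Real.log 2) - (1/2) * Real.log r - (1/2) * Real.log (1-r) := by
  have h1r : 0 < 1 - r := by linarith
  unfold Dhalf
  rw [Real.log_div (by norm_num) (ne_of_gt h0), Real.log_div (by norm_num) (ne_of_gt h1r),
    show (1/2 : ℝ) = 2⁻¹ by norm_num, Real.log_inv]
  ring

lemma Dhalf_pos {r : ℝ} (h0 : 0 < r) (h1 : r < 1/2) : 0 < Dhalf r := by
  have h1r : 0 < 1 - r := by linarith
  have hlt : Real.log (r * (1-r)) < Real.log (1/4) :=
    Real.log_lt_log (by positivity) (by nlinarith)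
  rw [Real.log_mul (ne_of_gt h0) (ne_of_gt h1r),
    show (1/4 : ℝ) = 2⁻¹ ^ 2 by norm_num, Real.log_pow, Real.log_inv] at hlt
  rw [Dhalf_eq h0 (by linarith)]
  push_cast at hlt
  linarith

lemma rate_identity_U {r : ℝ} (h0 : 0 < r) (h1 : r < 1/2) (lam : ℝ) :
    -(lam * Real.log (2*(1-r))) - (lam/2) * Real.log (r/(1-r)) = lam * Dhalf r := by
  have h1r : 0 < 1 - r := by linarith
  rw [Real.log_mul (by norm_num) (ne_of_gt h1r), Real.log_div (ne_of_gt h0) (ne_of_gt h1r),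
    Dhalf_eq h0 (by linarith)]
  ring

lemma rate_identity_L {r : ℝ} (h0 : 0 < r) (h1 : r < 1/2) (lam : ℝ) :
    -(lam * Real.log 2) - (lam/2) * Real.log r - (lam - lam/2) * Real.log (1-r)
      = lam * Dhalf r := by
  rw [Dhalf_eq h0 (by linarith)]
  ring

lemma tendsto_rate_U (r : ℝ) (h0 : 0 < r) (h1 : r < 1/2) (lam : ℝ)
    (mseq : ℕ → ℕ) (cseq : ℕ → ℝ)
    (hm : Tendsto (fun n : ℕ => (mseq n : ℝ)/n) atTop (nhds lam))
    (hc : Tendsto (fun n : ℕ => cseq n / n) atTop (nhds (lam/2))) :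
    Tendsto (fun n : ℕ => -(Real.log ((2*(1-r)) ^ (mseq n) * (r/(1-r)) ^ (cseq n)))/n)
      atTop (nhds (lam * Dhalf r)) := by
  have h1r : 0 < 1 - r := by linarith
  have hB : 0 < r/(1-r) := div_pos h0 h1r
  have heq : ∀ n : ℕ, -(Real.log ((2*(1-r)) ^ (mseq n) * (r/(1-r)) ^ (cseq n)))/n
      = -(((mseq n:ℝ)/n) * Real.log (2*(1-r))) - (cseq n / n) * Real.log (r/(1-r)) := by
    intro n
    rw [Real.log_mul (by positivity) (ne_of_gt (Real.rpow_pos_of_pos hB _)),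
      Real.log_pow, Real.log_rpow hB]
    ring
  have H := (hm.mul_const (Real.log (2*(1-r)))).neg.sub
    (hc.mul_const (Real.log (r/(1-r))))
  rw [rate_identity_U h0 h1 lam] at H
  exact H.congr (fun n => (heq n).symm)

lemma choose_le_two_pow (m k : ℕ) : m.choose k ≤ 2 ^ m := by
  rcases le_or_gt k m with h | h
  · calc m.choose k ≤ m.choose (m/2) := Nat.choose_le_middle k m
      _ ≤ ∑ j ∈ Finset.range (m+1), m.choose j :=
          Finset.single_le_sum (fun j _ => Nat.zero_le _)
            (Finset.mem_range.2 (by omega))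
      _ = 2 ^ m := Nat.sum_range_choose m
  · rw [Nat.choose_eq_zero_of_lt h]; exact Nat.zero_le _

lemma tendsto_log_div (mseq : ℕ → ℕ) (lam : ℝ) (hlam : 0 < lam)
    (hm : Tendsto (fun n : ℕ => (mseq n : ℝ)/n) atTop (nhds lam)) :
    Tendsto (fun n : ℕ => Real.log (mseq n + 1) / n) atTop (nhds 0) := by
  have hminf : Tendsto (fun n : ℕ => ((mseq n : ℝ) + 1)) atTop atTop := by
    apply tendsto_atTop_mono' _ _ (tendsto_natCast_atTop_atTop.const_mul_atTop
      (show (0:ℝ) < lam/2 by linarith))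
    have := hm.eventually (eventually_ge_nhds (show lam/2 < lam by linarith))
    filter_upwards [this, eventually_gt_atTop 0] with n hn hn0
    have hn0' : (0:ℝ) < n := by exact_mod_cast hn0
    have : lam/2 * n ≤ (mseq n : ℝ) := by
      rw [le_div_iff₀ hn0'] at hn
      linarith
    linarith
  have h1 : Tendsto (fun n : ℕ => Real.log ((mseq n : ℝ) + 1) / ((mseq n : ℝ) + 1))
      atTop (nhds 0) :=
    (Real.isLittleO_log_id_atTop.tendsto_div_nhds_zero).comp hminf
  have h2 : Tendsto (fun n : ℕ => ((mseq n : ℝ) + 1) / n) atTop (nhds lam) := by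
    have := hm.add (tendsto_one_div_atTop_nhds_zero_nat)
    simp only [add_zero] at this
    exact this.congr (fun n => by push_cast; ring)
  have := h1.mul h2
  rw [zero_mul] at this
  exact this.congr (fun n => by
    rcases eq_or_ne ((mseq n : ℝ) + 1) 0 with h | h
    · simp [h]  -- impossible but fine
    · field_simp)

lemma tendsto_rate_L (r : ℝ) (h0 : 0 < r) (h1 : r < 1/2) (lam : ℝ) (hlam : 0 < lam)
    (mseq kseq : ℕ → ℕ)
    (hm : Tendsto (fun n : ℕ => (mseq n : ℝ)/n) atTop (nhds lam))
    (hk : Tendsto (fun n : ℕ => (kseq n : ℝ)/n) atTop (nhds (lam/2)))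
    (hkm : ∀ᶠ n in atTop, kseq n ≤ mseq n)
    (hch : ∀ᶠ n in atTop, 2^(mseq n) ≤ (mseq n + 1)^3 * (mseq n).choose (kseq n)) :
    Tendsto (fun n : ℕ =>
      -(Real.log (((mseq n).choose (kseq n) : ℝ) *
        (r ^ (kseq n) * (1-r) ^ (mseq n - kseq n))))/n)
      atTop (nhds (lam * Dhalf r)) := by
  have h1r : 0 < 1 - r := by linarith
  have hCpos : ∀ᶠ n in atTop, 0 < ((mseq n).choose (kseq n) : ℝ) := by
    filter_upwards [hch] with n hn
    have h2 : 0 < (2:ℕ)^(mseq n) := pow_pos (by norm_num) _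
    have h3 : 0 < (mseq n).choose (kseq n) := by
      rcases Nat.eq_zero_or_pos ((mseq n).choose (kseq n)) with h | h
      · rw [h, mul_zero] at hn; omega
      · exact h
    exact_mod_cast h3
  have t1 : Tendsto (fun n : ℕ => -(Real.log (((mseq n).choose (kseq n) : ℝ)))/n)
      atTop (nhds (-(lam * Real.log 2))) := by
    have hlow : Tendsto (fun n : ℕ => -(((mseq n : ℝ)/n) * Real.log 2))
        atTop (nhds (-(lam * Real.log 2))) := (hm.mul_const (Real.log 2)).neg
    have hhigh : Tendsto
        (fun n : ℕ => -(((mseq n : ℝ)/n) * Real.log 2) + 3 * (Real.log (mseq n + 1) / n))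
        atTop (nhds (-(lam * Real.log 2))) := by
      have := hlow.add ((tendsto_log_div mseq lam hlam hm).const_mul 3)
      simpa using this
    refine tendsto_of_tendsto_of_tendsto_of_le_of_le' hlow hhigh ?_ ?_
    · filter_upwards [hCpos, eventually_gt_atTop 0] with n hC hn
      have hn' : (0:ℝ) < n := by exact_mod_cast hn
      have hle : ((mseq n).choose (kseq n) : ℝ) ≤ 2 ^ (mseq n) := by
        exact_mod_cast choose_le_two_pow (mseq n) (kseq n)
      have hlog : Real.log (((mseq n).choose (kseq n) : ℝ)) ≤ (mseq n) * Real.log 2 := by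
        calc Real.log (((mseq n).choose (kseq n) : ℝ)) ≤ Real.log ((2:ℝ) ^ (mseq n)) :=
            Real.log_le_log hC hle
          _ = (mseq n) * Real.log 2 := Real.log_pow _ _
      have e1 : -(((mseq n:ℝ)/n) * Real.log 2) = (-((mseq n:ℝ) * Real.log 2))/n := by ring
      rw [e1, div_le_div_iff_of_pos_right hn']
      linarith
    · filter_upwards [hCpos, hch, eventually_gt_atTop 0] with n hC hchn hn
      have hn' : (0:ℝ) < n := by exact_mod_cast hn
      have hcast : (2:ℝ) ^ (mseq n) ≤ ((mseq n : ℝ) + 1)^3 * ((mseq n).choose (kseq n) : ℝ) := by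
        exact_mod_cast hchn
      have hlog : (mseq n : ℝ) * Real.log 2 ≤
          3 * Real.log ((mseq n : ℝ) + 1) + Real.log (((mseq n).choose (kseq n) : ℝ)) := by
        have hmp : (0:ℝ) < ((mseq n : ℝ) + 1)^3 := by positivity
        calc (mseq n : ℝ) * Real.log 2 = Real.log ((2:ℝ) ^ (mseq n)) := (Real.log_pow _ _).symm
          _ ≤ Real.log (((mseq n : ℝ) + 1)^3 * ((mseq n).choose (kseq n) : ℝ)) :=
            Real.log_le_log (by positivity) hcast
          _ = 3 * Real.log ((mseq n : ℝ) + 1) + Real.log (((mseq n).choose (kseq n) : ℝ)) := by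
            rw [Real.log_mul (ne_of_gt hmp) (ne_of_gt hC), Real.log_pow]
            push_cast
            ring
      have e2 : -(((mseq n:ℝ)/n) * Real.log 2) + 3 * (Real.log ((mseq n:ℝ) + 1) / n)
          = (-((mseq n:ℝ) * Real.log 2) + 3 * Real.log ((mseq n:ℝ) + 1))/n := by ring
      rw [e2, div_le_div_iff_of_pos_right hn']
      linarith
  have t2 := hk.mul_const (Real.log r)
  have t3 := (hm.sub hk).mul_const (Real.log (1-r))
  have H := (t1.sub t2).sub t3
  rw [show -(lam * Real.log 2) - lam/2 * Real.log r - (lam - lam/2) * Real.log (1-r)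
      = lam * Dhalf r from rate_identity_L h0 h1 lam] at H
  apply H.congr'
  filter_upwards [hkm, hCpos] with n h1n h2n
  have hxp : (0:ℝ) < r ^ (kseq n) := by positivity
  have hyp : (0:ℝ) < (1-r) ^ (mseq n - kseq n) := by positivity
  rw [Real.log_mul (ne_of_gt h2n) (by positivity), Real.log_mul (ne_of_gt hxp) (ne_of_gt hyp),
    Real.log_pow, Real.log_pow, Nat.cast_sub h1n]
  ring

lemma tendsto_zero_of_rate (u : ℕ → ℝ) (l : ℝ) (hl : 0 < l)
    (hpos : ∀ᶠ n in atTop, 0 < u n)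
    (hrate : Tendsto (fun n : ℕ => -(Real.log (u n))/n) atTop (nhds l)) :
    Tendsto u atTop (nhds 0) := by
  have hbot : Tendsto (fun n : ℕ => -((l/2) * n)) atTop atBot := by
    rw [tendsto_neg_atBot_iff]
    exact tendsto_natCast_atTop_atTop.const_mul_atTop (by linarith)
  have h1 : Tendsto (fun n : ℕ => Real.log (u n)) atTop atBot := by
    apply tendsto_atBot_mono' atTop _ hbot
    have := hrate.eventually (eventually_ge_nhds (show l/2 < l by linarith))
    filter_upwards [this, eventually_gt_atTop 0] with n hn hn0
    have hn' : (0:ℝ) < n := by exact_mod_cast hn0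
    rw [le_div_iff₀ hn'] at hn
    linarith
  have h2 := Real.tendsto_exp_atBot.comp h1
  apply h2.congr'
  filter_upwards [hpos] with n hn
  exact Real.exp_log hn

lemma tendsto_floor_div (a : ℝ) (ha : 0 ≤ a) :
    Tendsto (fun n : ℕ => (⌊a * (n:ℝ)⌋₊ : ℝ)/n) atTop (nhds a) :=
  (tendsto_nat_floor_mul_div_atTop ha).comp tendsto_natCast_atTop_atTop

lemma tendsto_halfdiv (mseq : ℕ → ℕ) (lam : ℝ) (j : ℕ)
    (hm : Tendsto (fun n : ℕ => (mseq n : ℝ)/n) atTop (nhds lam)) :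
    Tendsto (fun n : ℕ => ((mseq n / 2 + j : ℕ) : ℝ)/n) atTop (nhds (lam/2)) := by
  have h0 := tendsto_one_div_atTop_nhds_zero_nat (𝕜 := ℝ)
  have hlo : Tendsto (fun n : ℕ => ((mseq n : ℝ)/n)/2 - (1/2) * (1/n) + j * (1/n))
      atTop (nhds (lam/2)) := by
    have := ((hm.div_const 2).sub (h0.const_mul (1/2))).add (h0.const_mul (j:ℝ))
    simpa [mul_comm] using this
  have hhi : Tendsto (fun n : ℕ => ((mseq n : ℝ)/n)/2 + j * (1/n))
      atTop (nhds (lam/2)) := by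
    have := (hm.div_const 2).add (h0.const_mul (j:ℝ))
    simpa [mul_comm] using this
  refine tendsto_of_tendsto_of_tendsto_of_le_of_le' hlo hhi ?_ ?_
  · filter_upwards [eventually_gt_atTop 0] with n hn
    have hn' : (0:ℝ) < n := by exact_mod_cast hn
    have hfl : ((mseq n : ℝ) - 1)/2 + j ≤ ((mseq n / 2 + j : ℕ) : ℝ) := by
      have h2 : mseq n ≤ 2 * (mseq n / 2) + 1 := by omega
      have h2' : (mseq n : ℝ) ≤ 2 * ((mseq n / 2 : ℕ) : ℝ) + 1 := by exact_mod_cast h2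
      push_cast
      linarith
    have e1 : ((mseq n : ℝ)/n)/2 - (1/2) * (1/n) + (j:ℝ) * (1/n)
        = (((mseq n : ℝ) - 1)/2 + j)/n := by ring
    rw [e1, div_le_div_iff_of_pos_right hn']
    exact hfl
  · filter_upwards [eventually_gt_atTop 0] with n hn
    have hn' : (0:ℝ) < n := by exact_mod_cast hn
    have hfl : ((mseq n / 2 + j : ℕ) : ℝ) ≤ (mseq n : ℝ)/2 + j := by
      have h2 : 2 * (mseq n / 2) ≤ mseq n := by omega
      have h2' : 2 * ((mseq n / 2 : ℕ) : ℝ) ≤ (mseq n : ℝ) := by exact_mod_cast h2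
      push_cast
      linarith
    have e1 : ((mseq n : ℝ)/n)/2 + (j:ℝ) * (1/n) = ((mseq n : ℝ)/2 + j)/n := by ring
    rw [e1, div_le_div_iff_of_pos_right hn']
    exact hfl

end Helpers
section Part1
open Finset

lemma half_ineq_iff (mm d cc : ℕ) : ((mm:ℝ) + d)/2 ≤ (cc:ℝ) ↔ mm + d ≤ 2*cc := by
  rw [div_le_iff₀ (by norm_num : (0:ℝ) < 2)]
  constructor
  · intro h
    have h' : (mm:ℝ) + d ≤ 2*cc := by linarith
    exact_mod_cast h'
  · intro h
    have h' : (mm:ℝ) + d ≤ 2*(cc:ℝ) := by exact_mod_cast h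
    linarith

lemma card_tuple (s : Finset ℕ) (e : ℕ ↪ ℕ ⊕ ℕ) (P : ℕ ⊕ ℕ → Prop) [DecidablePred P] :
    (Finset.univ.filter fun i : ↥(s.map e) => P ↑i).card
      = (s.filter fun j => P (e j)).card := by
  classical
  rw [card_univ_filter, Finset.filter_map, Finset.card_map]
  congr 1

lemma card_split {Ω : Type*} [MeasurableSpace Ω] (ξ : ℕ → Ω → ℤ)
    (hrange : ∀ i ω, ξ i ω = 1 ∨ ξ i ω = -1) (s : Finset ℕ) (ω : Ω) :
    (s.filter fun i => ξ i ω = 1).card + (s.filter fun i => ξ i ω = -1).card = s.card := by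
  classical
  conv_rhs => rw [← Finset.card_filter_add_card_filter_not (p := fun i => ξ i ω = 1)]
  congr 1
  apply congrArg
  apply Finset.filter_congr
  intro i _
  have := hrange i ω
  constructor
  · intro h; omega
  · intro h; omega

lemma ceil_floor_split {ε : ℝ} (hε0 : 0 < ε) (hε1 : ε < 1) (n : ℕ) :
    ⌈(1-ε) * (n:ℝ)⌉₊ = n - ⌊ε * (n:ℝ)⌋₊ ∧ ⌊ε * (n:ℝ)⌋₊ ≤ n := by
  have hfl : ⌊ε * (n:ℝ)⌋₊ ≤ n := by
    have h1 : ε * (n:ℝ) ≤ (n:ℝ) := by nlinarith [Nat.cast_nonneg (α := ℝ) n]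
    have := Nat.floor_le_floor (R := ℝ) h1
    rwa [Nat.floor_natCast] at this
  refine ⟨?_, hfl⟩
  rcases Nat.eq_zero_or_pos n with rfl | hn
  · simp
  have hn' : (0:ℝ) < n := by exact_mod_cast hn
  have hflt : ⌊ε * (n:ℝ)⌋₊ < n := by
    have h1 : ε * (n:ℝ) < (n:ℝ) := by nlinarith
    by_contra h
    push_neg at h
    have h2 : (n:ℝ) ≤ ⌊ε * (n:ℝ)⌋₊ := by exact_mod_cast h
    have h3 : (⌊ε * (n:ℝ)⌋₊ : ℝ) ≤ ε * n := Nat.floor_le (by positivity)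
    linarith
  have hexp : (0:ℝ) ≤ ε * n := by positivity
  have hlo : (⌊ε * (n:ℝ)⌋₊ : ℝ) ≤ ε * n := Nat.floor_le hexp
  have hhi : ε * (n:ℝ) < ⌊ε * (n:ℝ)⌋₊ + 1 := Nat.lt_floor_add_one _
  have h1 : ⌊ε * (n:ℝ)⌋₊ + 1 ≤ n := hflt
  have hc1 : ((n - ⌊ε * (n:ℝ)⌋₊ - 1 : ℕ) : ℝ) = (n:ℝ) - ⌊ε * (n:ℝ)⌋₊ - 1 := by
    rw [Nat.sub_sub]
    push_cast [Nat.cast_sub h1]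
    ring
  have hc2 : ((n - ⌊ε * (n:ℝ)⌋₊ : ℕ) : ℝ) = (n:ℝ) - ⌊ε * (n:ℝ)⌋₊ := by
    push_cast [Nat.cast_sub hflt.le]
    ring
  rw [Nat.ceil_eq_iff (by omega)]
  constructor
  · rw [hc1]
    nlinarith
  · rw [hc2]
    nlinarith


end Part1
section ErrEq
open Finset

def tailSum (r c : ℝ) (s : Finset ℕ) : ℝ :=
  ∑ T ∈ s.powerset.filter (fun T => c ≤ (T.card : ℝ)),
    r ^ T.card * (1 - r) ^ (s.card - T.card)

def SPf (p ε : ℝ) (n : ℕ) : ℝ :=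
  tailSum p (((⌊(1-ε)*(n:ℝ)⌋₊ : ℝ) + 1)/2) (Finset.Icc 1 ⌊(1-ε)*(n:ℝ)⌋₊)

def SQ1f (q ε : ℝ) (n : ℕ) : ℝ :=
  tailSum q (((⌊ε*(n:ℝ)⌋₊ : ℝ) + 3)/2) (Finset.Icc ⌈(1-ε)*(n:ℝ)⌉₊ n)

def SQ2f (q ε : ℝ) (n : ℕ) : ℝ :=
  tailSum q ((⌊ε*(n:ℝ)⌋₊ : ℝ)/2) (Finset.Icc ⌈(1-ε)*(n:ℝ)⌉₊ n)

variable {Ω : Type*} [MeasurableSpace Ω]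

lemma ite_eq_neg_one_iff (c : Prop) [Decidable c] : ((if c then (1:ℤ) else -1) = -1) ↔ ¬ c := by
  split_ifs with h <;> simp [h]

/-- `¬(t/2 ≤ c1)  ↔  (t+d)/2 ≤ cm`  when `c1 + cm = t + e` and `d = 2e+1`. -/
lemma neg_half_iff {t e c1 cm : ℕ} (hsum : c1 + cm = t + e) (d : ℝ) (hd : d = 2*e+1) :
    (¬((t:ℝ)/2 ≤ (c1:ℝ))) ↔ ((t:ℝ) + d)/2 ≤ (cm:ℝ) := by
  subst hd
  constructor
  · intro h
    have h1 : (c1:ℝ) < (t:ℝ)/2 := lt_of_not_ge h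
    have h2 : 2*c1 < t := by
      have : 2*(c1:ℝ) < t := by linarith
      exact_mod_cast this
    have h3 : t + (2*e+1) ≤ 2*cm := by omega
    have h4 : (t:ℝ) + (2*(e:ℝ)+1) ≤ 2*(cm:ℝ) := by exact_mod_cast h3
    rw [div_le_iff₀ (by norm_num : (0:ℝ) < 2)]
    linarith
  · intro h hc
    rw [div_le_iff₀ (by norm_num : (0:ℝ) < 2)] at h
    rw [div_le_iff₀ (by norm_num : (0:ℝ) < 2)] at hc
    have h3 : t + (2*e+1) ≤ 2*cm := by
      have : (t:ℝ) + (2*(e:ℝ)+1) ≤ 2*(cm:ℝ) := by linarith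
      exact_mod_cast this
    have h4 : t ≤ 2*c1 := by
      have : (t:ℝ) ≤ 2*(c1:ℝ) := by linarith
      exact_mod_cast this
    omega

lemma err_eq (μ : Measure Ω) [IsProbabilityMeasure μ]
    (p q : ℝ) (hp : p ∈ Set.Ioo (0:ℝ) (1/2)) (hq : q ∈ Set.Ioo (0:ℝ) (1/2))
    (Y N : ℕ → Ω → ℤ)
    (hYmeas : ∀ i, Measurable (Y i)) (hNmeas : ∀ i, Measurable (N i))
    (hYrange : ∀ i ω, Y i ω = 1 ∨ Y i ω = -1)
    (hNrange : ∀ i ω, N i ω = 1 ∨ N i ω = -1)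
    (hYdist : ∀ i, μ {ω | Y i ω = 1} = ENNReal.ofReal (1 - p))
    (hNdist : ∀ i, μ {ω | N i ω = -1} = ENNReal.ofReal q)
    (hindep : iIndepFun (m := fun _ => (inferInstance : MeasurableSpace ℤ)) (Sum.elim Y N) μ)
    (ε : ℝ) (hε : ε ∈ Set.Ioo (0:ℝ) 1) (n : ℕ) :
    μ (epsErr Y N ε n)
      = ENNReal.ofReal ((1 - SPf p ε n) * SQ1f q ε n + SPf p ε n * (1 - SQ2f q ε n))
    ∧ SPf p ε n ≤ 1 ∧ SQ1f q ε n ≤ 1 ∧ SQ2f q ε n ≤ 1 := by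
  classical
  obtain ⟨hp0, hp2⟩ := hp
  obtain ⟨hq0, hq2⟩ := hq
  obtain ⟨hε0, hε1⟩ := hε
  obtain ⟨hindY, hindN⟩ := block_indep μ Y N hindep
  have hYneg : ∀ i, μ {ω | Y i ω = -1} = ENNReal.ofReal p := by
    intro i
    have hc : {ω | Y i ω = -1} = {ω | Y i ω = 1}ᶜ := by
      ext ω
      have := hYrange i ω
      simp only [Set.mem_setOf_eq, Set.mem_compl_iff]
      omega
    have hms : MeasurableSet {ω | Y i ω = 1} := hYmeas i (measZ ({1} : Set ℤ))
    rw [hc, measure_compl hms (measure_ne_top μ _), hYdist i,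
      measure_univ, ← ENNReal.ofReal_one, ← ENNReal.ofReal_sub _ (by linarith)]
    norm_num
  set mT := ⌊(1-ε)*(n:ℝ)⌋₊ with hmT
  set aN := ⌈(1-ε)*(n:ℝ)⌉₊ with haN
  set kN := ⌊ε*(n:ℝ)⌋₊ with hkN
  have hsplitn := ceil_floor_split hε0 hε1 n
  rw [← hkN, ← haN] at hsplitn
  have hcardY : (Finset.Icc 1 mT).card = mT := by rw [Nat.card_Icc]; omega
  have hcardN : (Finset.Icc aN n).card = kN + 1 := by
    rw [Nat.card_Icc, hsplitn.1]
    have := hsplitn.2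
    omega
  -- measures of the three tail events
  have hmuSp : μ {ω | ((mT : ℝ)+1)/2 ≤
      (((Finset.Icc 1 mT).filter fun j => Y j ω = -1).card : ℝ)}
      = ENNReal.ofReal (SPf p ε n) := by
    have := tail_measure μ Y (Finset.Icc 1 mT) (-1) (Or.inr rfl) p hp0.le (by linarith)
      hYmeas hYrange (fun i _ => hYneg i) (hindY _) (((mT : ℝ)+1)/2)
    exact this
  have hmuSq1 : μ {ω | ((kN : ℝ)+3)/2 ≤
      (((Finset.Icc aN n).filter fun i => N i ω = -1).card : ℝ)}
      = ENNReal.ofReal (SQ1f q ε n) :=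
    tail_measure μ N (Finset.Icc aN n) (-1) (Or.inr rfl) q hq0.le (by linarith)
      hNmeas hNrange (fun i _ => hNdist i) (hindN _) _
  have hmuSq2 : μ {ω | (kN : ℝ)/2 ≤
      (((Finset.Icc aN n).filter fun i => N i ω = -1).card : ℝ)}
      = ENNReal.ofReal (SQ2f q ε n) :=
    tail_measure μ N (Finset.Icc aN n) (-1) (Or.inr rfl) q hq0.le (by linarith)
      hNmeas hNrange (fun i _ => hNdist i) (hindN _) _
  have hSp1 : SPf p ε n ≤ 1 := by
    rw [← ENNReal.ofReal_le_one, ← hmuSp]; exact prob_le_one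
  have hSq11 : SQ1f q ε n ≤ 1 := by
    rw [← ENNReal.ofReal_le_one, ← hmuSq1]; exact prob_le_one
  have hSq21 : SQ2f q ε n ≤ 1 := by
    rw [← ENNReal.ofReal_le_one, ← hmuSq2]; exact prob_le_one
  have hSp0 : 0 ≤ SPf p ε n := by
    unfold SPf tailSum
    exact Finset.sum_nonneg fun T _ => mul_nonneg (pow_nonneg hp0.le _)
      (pow_nonneg (by linarith : (0:ℝ) ≤ 1 - p) _)
  have hSq10 : 0 ≤ SQ1f q ε n := by
    unfold SQ1f tailSum
    exact Finset.sum_nonneg fun T _ => mul_nonneg (pow_nonneg hq0.le _)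
      (pow_nonneg (by linarith : (0:ℝ) ≤ 1 - q) _)
  have hSq20 : 0 ≤ SQ2f q ε n := by
    unfold SQ2f tailSum
    exact Finset.sum_nonneg fun T _ => mul_nonneg (pow_nonneg hq0.le _)
      (pow_nonneg (by linarith : (0:ℝ) ≤ 1 - q) _)
  refine ⟨?_, hSp1, hSq11, hSq21⟩
  -- set-level rewrites of the events
  have hθneg : {ω | thetaTilde Y mT ω = -1} = {ω | ((mT : ℝ)+1)/2 ≤
      (((Finset.Icc 1 mT).filter fun j => Y j ω = -1).card : ℝ)} := by
    ext ω
    have hcs := card_split Y hYrange (Finset.Icc 1 mT) ω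
    rw [hcardY] at hcs
    simp only [Set.mem_setOf_eq, thetaTilde]
    rw [ite_eq_neg_one_iff]
    exact neg_half_iff (e := 0) (by omega) 1 (by norm_num)
  have hA1 : {ω | ¬((kN : ℝ)/2 ≤
        (((Finset.Icc aN n).filter fun i => N i ω = 1).card : ℝ))}
      = {ω | ((kN : ℝ)+3)/2 ≤
        (((Finset.Icc aN n).filter fun i => N i ω = -1).card : ℝ)} := by
    ext ω
    have hcs := card_split N hNrange (Finset.Icc aN n) ω
    rw [hcardN] at hcs
    simp only [Set.mem_setOf_eq]
    exact neg_half_iff (e := 1) (by omega) 3 (by norm_num)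
  -- error event split
  have hsplitE : epsErr Y N ε n =
      ({ω | thetaTilde Y mT ω = -1}ᶜ ∩ {ω | ¬((kN : ℝ)/2 ≤
          (((Finset.Icc aN n).filter fun i => N i ω = 1).card : ℝ))})
      ∪ ({ω | thetaTilde Y mT ω = -1} ∩ {ω | (kN : ℝ)/2 ≤
          (((Finset.Icc aN n).filter fun i => N i ω = -1).card : ℝ)}ᶜ) := by
    ext ω
    have hθr : thetaTilde Y mT ω = 1 ∨ thetaTilde Y mT ω = -1 := by
      simp only [thetaTilde]
      split_ifs <;> simp
    simp only [epsErr, Set.mem_setOf_eq, Set.mem_union, Set.mem_inter_iff, Set.mem_compl_iff,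
      ← hmT, ← haN, ← hkN]
    rcases hθr with h | h
    · have hfe : (Finset.Icc aN n).filter (fun i => thetaTilde Y mT ω * N i ω = 1)
          = (Finset.Icc aN n).filter (fun i => N i ω = 1) :=
        Finset.filter_congr (fun i _ => by rw [h, one_mul])
      rw [hfe]
      simp [h]
    · have hfe : (Finset.Icc aN n).filter (fun i => thetaTilde Y mT ω * N i ω = 1)
          = (Finset.Icc aN n).filter (fun i => N i ω = -1) :=
        Finset.filter_congr (fun i _ => by
          rw [h]
          constructor
          · intro hh; omega
          · intro hh; omega)
      rw [hfe]
      simp [h]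
  -- tuple machinery
  set SY := (Finset.Icc 1 mT).map ⟨Sum.inl, Sum.inl_injective⟩ with hSY
  set SN := (Finset.Icc aN n).map ⟨Sum.inr, Sum.inr_injective⟩ with hSN
  set tY : Ω → (↥SY → ℤ) := fun ω i => Sum.elim Y N i.1 ω with htY
  set tN : Ω → (↥SN → ℤ) := fun ω i => Sum.elim Y N i.1 ω with htN
  have hfmeas : ∀ i : ℕ ⊕ ℕ, Measurable (Sum.elim Y N i) := by
    intro i
    rcases i with j | j
    · exact hYmeas j
    · exact hNmeas j
  have htYmeas : Measurable tY := measurable_pi_lambda _ (fun i => hfmeas i.val)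
  have htNmeas : Measurable tN := measurable_pi_lambda _ (fun i => hfmeas i.val)
  have hIF : IndepFun tY tN μ := by
    apply hindep.indepFun_finset SY SN ?_ hfmeas
    simp only [hSY, hSN, Finset.disjoint_left, Finset.mem_map, Function.Embedding.coeFn_mk]
    rintro x ⟨j, _, rfl⟩ ⟨j', _, h⟩
    exact Sum.inl_ne_inr h.symm
  have hprod : ∀ (BY : Set (↥SY → ℤ)) (BN : Set (↥SN → ℤ)),
      μ (tY ⁻¹' BY ∩ tN ⁻¹' BN) = μ (tY ⁻¹' BY) * μ (tN ⁻¹' BN) :=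
    fun BY BN => hIF.measure_inter_preimage_eq_mul BY BN (measPiZ _) (measPiZ _)
  -- events as preimages
  have hpreY : {ω | ((mT : ℝ)+1)/2 ≤
      (((Finset.Icc 1 mT).filter fun j => Y j ω = -1).card : ℝ)}
      = tY ⁻¹' {v : ↥SY → ℤ | ((mT : ℝ)+1)/2 ≤
          ((Finset.univ.filter fun i : ↥SY => v i = -1).card : ℝ)} := by
    ext ω
    simp only [Set.mem_setOf_eq, Set.mem_preimage, htY]
    rw [card_tuple (Finset.Icc 1 mT) ⟨Sum.inl, Sum.inl_injective⟩
      (fun x => Sum.elim Y N x ω = -1)]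
    simp only [Function.Embedding.coeFn_mk, Sum.elim_inl]
    convert Iff.rfl using 4
    exact Finset.filter_congr (fun _ _ => Iff.rfl)
  have hpreN1 : {ω | ¬((kN : ℝ)/2 ≤
      (((Finset.Icc aN n).filter fun i => N i ω = 1).card : ℝ))}
      = tN ⁻¹' {v : ↥SN → ℤ | ¬((kN : ℝ)/2 ≤
          ((Finset.univ.filter fun i : ↥SN => v i = 1).card : ℝ))} := by
    ext ω
    simp only [Set.mem_setOf_eq, Set.mem_preimage, htN]
    rw [card_tuple (Finset.Icc aN n) ⟨Sum.inr, Sum.inr_injective⟩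
      (fun x => Sum.elim Y N x ω = 1)]
    simp only [Function.Embedding.coeFn_mk, Sum.elim_inr]
    convert Iff.rfl using 5
    exact Finset.filter_congr (fun _ _ => Iff.rfl)
  have hpreN2 : {ω | (kN : ℝ)/2 ≤
      (((Finset.Icc aN n).filter fun i => N i ω = -1).card : ℝ)}
      = tN ⁻¹' {v : ↥SN → ℤ | (kN : ℝ)/2 ≤
          ((Finset.univ.filter fun i : ↥SN => v i = -1).card : ℝ)} := by
    ext ω
    simp only [Set.mem_setOf_eq, Set.mem_preimage, htN]
    rw [card_tuple (Finset.Icc aN n) ⟨Sum.inr, Sum.inr_injective⟩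
      (fun x => Sum.elim Y N x ω = -1)]
    simp only [Function.Embedding.coeFn_mk, Sum.elim_inr]
    convert Iff.rfl using 4
    exact Finset.filter_congr (fun _ _ => Iff.rfl)
  -- compute
  have hμθ : μ {ω | thetaTilde Y mT ω = -1} = ENNReal.ofReal (SPf p ε n) := by
    rw [hθneg]; exact hmuSp
  have hmeasθ : MeasurableSet {ω | thetaTilde Y mT ω = -1} := by
    rw [hθneg, hpreY]
    exact htYmeas (measPiZ _)
  have hmeasB2 : MeasurableSet {ω | (kN : ℝ)/2 ≤
      (((Finset.Icc aN n).filter fun i => N i ω = -1).card : ℝ)} := by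
    rw [hpreN2]
    exact htNmeas (measPiZ _)
  rw [hsplitE, measure_union ?disj ?meas2]
  case disj =>
    refine Set.disjoint_left.2 fun ω hω1 hω2 => ?_
    exact hω1.1 hω2.1
  case meas2 =>
    exact hmeasθ.inter hmeasB2.compl
  have hμA1 : μ {ω | ¬((kN : ℝ)/2 ≤
      (((Finset.Icc aN n).filter fun i => N i ω = 1).card : ℝ))}
      = ENNReal.ofReal (SQ1f q ε n) := by
    rw [hA1]; exact hmuSq1
  have hcomplY : μ ({ω | thetaTilde Y mT ω = -1}ᶜ) = 1 - ENNReal.ofReal (SPf p ε n) := by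
    rw [measure_compl hmeasθ (measure_ne_top μ _), hμθ, measure_univ]
  have hcomplN : μ ({ω | (kN : ℝ)/2 ≤
      (((Finset.Icc aN n).filter fun i => N i ω = -1).card : ℝ)}ᶜ)
      = 1 - ENNReal.ofReal (SQ2f q ε n) := by
    rw [measure_compl hmeasB2 (measure_ne_top μ _), hmuSq2, measure_univ]
  have hterm1 : μ ({ω | thetaTilde Y mT ω = -1}ᶜ ∩ {ω | ¬((kN : ℝ)/2 ≤
      (((Finset.Icc aN n).filter fun i => N i ω = 1).card : ℝ))})
      = μ ({ω | thetaTilde Y mT ω = -1}ᶜ) * μ {ω | ¬((kN : ℝ)/2 ≤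
      (((Finset.Icc aN n).filter fun i => N i ω = 1).card : ℝ))} := by
    rw [hθneg, hpreY, ← Set.preimage_compl, hpreN1]
    exact hprod _ _
  have hterm2 : μ ({ω | thetaTilde Y mT ω = -1} ∩ {ω | (kN : ℝ)/2 ≤
      (((Finset.Icc aN n).filter fun i => N i ω = -1).card : ℝ)}ᶜ)
      = μ {ω | thetaTilde Y mT ω = -1} * μ ({ω | (kN : ℝ)/2 ≤
      (((Finset.Icc aN n).filter fun i => N i ω = -1).card : ℝ)}ᶜ) := by
    rw [hθneg, hpreY, hpreN2, ← Set.preimage_compl]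
    exact hprod _ _
  rw [hterm1, hterm2, hcomplY, hμA1, hμθ, hcomplN]
  rw [ENNReal.ofReal_add (mul_nonneg (by linarith) hSq10) (mul_nonneg hSp0 (by linarith)),
    ENNReal.ofReal_mul (by linarith), ENNReal.ofReal_mul hSp0,
    ENNReal.ofReal_sub _ hSp0, ENNReal.ofReal_sub _ hSq20, ENNReal.ofReal_one]
end ErrEq
section Sandwich

lemma neg_log_max_div (a b : ℝ) (ha : 0 < a) (hb : 0 < b) (n : ℕ) :
    -(Real.log (max a b))/n = min (-(Real.log a)/n) (-(Real.log b)/n) := by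
  have hlm : Real.log (max a b) = max (Real.log a) (Real.log b) := by
    rcases le_total a b with h | h
    · rw [max_eq_right h, max_eq_right (Real.log_le_log ha h)]
    · rw [max_eq_left h, max_eq_left (Real.log_le_log hb h)]
  rw [hlm, ← min_neg_neg, min_div_div_right (by positivity : (0:ℝ) ≤ n)]

lemma sandwich_upper (x a b : ℝ) (ha : 0 < a) (hb : 0 < b)
    (h1 : (1/2)*a ≤ x) (h2 : (1/2)*b ≤ x) (n : ℕ) (hn : 0 < n) :
    -(Real.log x)/n ≤ Real.log 2/n + min (-(Real.log a)/n) (-(Real.log b)/n) := by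
  have hn' : (0:ℝ) < n := by exact_mod_cast hn
  rw [← neg_log_max_div a b ha hb n]
  have hx : 0 < x := lt_of_lt_of_le (by positivity) h1
  have hmaxpos : 0 < max a b := lt_max_of_lt_left ha
  have hmax : max a b / 2 ≤ x := by
    rcases le_total a b with h | h
    · rw [max_eq_right h]; linarith
    · rw [max_eq_left h]; linarith
  have hlog : Real.log (max a b) - Real.log 2 ≤ Real.log x := by
    rw [← Real.log_div (ne_of_gt hmaxpos) (by norm_num : (2:ℝ) ≠ 0)]
    exact Real.log_le_log (by positivity) hmax
  have hkey : -(Real.log x) ≤ Real.log 2 + -(Real.log (max a b)) := by linarith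
  calc -(Real.log x)/n ≤ (Real.log 2 + -(Real.log (max a b)))/n :=
        (div_le_div_iff_of_pos_right hn').2 hkey
    _ = Real.log 2/n + -(Real.log (max a b))/n := by ring

lemma sandwich_lower (x a b : ℝ) (ha : 0 < a) (hb : 0 < b) (hx : 0 < x)
    (h : x ≤ a + b) (n : ℕ) (hn : 0 < n) :
    -(Real.log 2)/n + min (-(Real.log a)/n) (-(Real.log b)/n) ≤ -(Real.log x)/n := by
  have hn' : (0:ℝ) < n := by exact_mod_cast hn
  rw [← neg_log_max_div a b ha hb n]
  have hmaxpos : 0 < max a b := lt_max_of_lt_left ha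
  have hmax : x ≤ 2 * max a b := by
    rcases le_total a b with hab | hab
    · rw [max_eq_right hab]; linarith
    · rw [max_eq_left hab]; linarith
  have hlog : Real.log x ≤ Real.log 2 + Real.log (max a b) := by
    rw [← Real.log_mul (by norm_num : (2:ℝ) ≠ 0) (ne_of_gt hmaxpos)]
    exact Real.log_le_log hx hmax
  have hkey : -(Real.log 2) + -(Real.log (max a b)) ≤ -(Real.log x) := by linarith
  calc -(Real.log 2)/n + -(Real.log (max a b))/n
      = (-(Real.log 2) + -(Real.log (max a b)))/n := by ring
    _ ≤ -(Real.log x)/n := (div_le_div_iff_of_pos_right hn').2 hkey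

lemma eventually_seq_ge (mseq : ℕ → ℕ) (lam : ℝ) (hlam : 0 < lam)
    (hm : Filter.Tendsto (fun n : ℕ => (mseq n : ℝ)/n) Filter.atTop (nhds lam)) (C : ℕ) :
    ∀ᶠ n in Filter.atTop, C ≤ mseq n := by
  have h1 : ∀ᶠ n in Filter.atTop, lam/2 ≤ (mseq n : ℝ)/n :=
    hm.eventually (eventually_ge_nhds (by linarith))
  have h2 : Filter.Tendsto (fun n : ℕ => (lam/2) * n) Filter.atTop Filter.atTop :=
    tendsto_natCast_atTop_atTop.const_mul_atTop (by linarith)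
  have h3 := h2.eventually_ge_atTop (C : ℝ)
  filter_upwards [h1, h3, Filter.eventually_gt_atTop 0] with n hn h3n hn0
  have hn' : (0:ℝ) < n := by exact_mod_cast hn0
  have h4 : lam/2 * n ≤ (mseq n : ℝ) := by
    rw [le_div_iff₀ hn'] at hn
    linarith
  have : (C:ℝ) ≤ (mseq n : ℝ) := le_trans h3n h4
  exact_mod_cast this

lemma tailSum_nonneg (r c : ℝ) (s : Finset ℕ) (h0 : 0 ≤ r) (h1 : r ≤ 1) :
    0 ≤ tailSum r c s := by
  unfold tailSum
  exact Finset.sum_nonneg fun T _ => mul_nonneg (pow_nonneg h0 _)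
    (pow_nonneg (by linarith) _)

end Sandwich
section Part1Final
open Finset

lemma part1 {Ω : Type*} [MeasurableSpace Ω]
    (μ : Measure Ω) [IsProbabilityMeasure μ]
    (p q : ℝ) (hp : p ∈ Set.Ioo (0:ℝ) (1/2)) (hq : q ∈ Set.Ioo (0:ℝ) (1/2))
    (Y N : ℕ → Ω → ℤ)
    (hYmeas : ∀ i, Measurable (Y i)) (hNmeas : ∀ i, Measurable (N i))
    (hYrange : ∀ i ω, Y i ω = 1 ∨ Y i ω = -1)
    (hNrange : ∀ i ω, N i ω = 1 ∨ N i ω = -1)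
    (hYdist : ∀ i, μ {ω | Y i ω = 1} = ENNReal.ofReal (1 - p))
    (hNdist : ∀ i, μ {ω | N i ω = -1} = ENNReal.ofReal q)
    (hindep : iIndepFun (m := fun _ => (inferInstance : MeasurableSpace ℤ)) (Sum.elim Y N) μ)
    (ε : ℝ) (hε : ε ∈ Set.Ioo (0:ℝ) 1) :
    Tendsto (fun n : ℕ => -(Real.log ((μ (epsErr Y N ε n)).toReal)) / (n : ℝ))
      atTop (nhds (min ((1-ε) * Dhalf p) (ε * Dhalf q))) := by
  classical
  obtain ⟨hp0, hp2⟩ := hp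
  obtain ⟨hq0, hq2⟩ := hq
  obtain ⟨hε0, hε1⟩ := hε
  have h1ε0 : 0 < 1 - ε := by linarith
  have h1p : 0 < 1 - p := by linarith
  have h1q : 0 < 1 - q := by linarith
  have hDp := Dhalf_pos hp0 hp2
  have hDq := Dhalf_pos hq0 hq2
  -- sequences
  set mT : ℕ → ℕ := fun n => ⌊(1-ε)*(n:ℝ)⌋₊ with hmTdef
  set kN : ℕ → ℕ := fun n => ⌊ε*(n:ℝ)⌋₊ with hkNdef
  set kp : ℕ → ℕ := fun n => mT n / 2 + 1 with hkpdef
  set kq : ℕ → ℕ := fun n => kN n / 2 + 2 with hkqdef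
  -- basic limits
  have hm : Tendsto (fun n : ℕ => (mT n : ℝ)/n) atTop (nhds (1-ε)) :=
    tendsto_floor_div _ (by linarith)
  have hK : Tendsto (fun n : ℕ => (kN n : ℝ)/n) atTop (nhds ε) :=
    tendsto_floor_div _ hε0.le
  have hKp1 : Tendsto (fun n : ℕ => ((kN n + 1 : ℕ) : ℝ)/n) atTop (nhds ε) := by
    have h := hK.add tendsto_one_div_atTop_nhds_zero_nat
    rw [add_zero] at h
    exact h.congr (fun n => by push_cast; ring)
  have h0n := tendsto_one_div_atTop_nhds_zero_nat (𝕜 := ℝ)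
  -- U-rate limits
  have hcp : Tendsto (fun n : ℕ => (((mT n : ℝ) + 1)/2)/n) atTop (nhds ((1-ε)/2)) := by
    have h := (hm.div_const 2).add (h0n.const_mul (1/2))
    rw [mul_zero, add_zero] at h
    exact h.congr (fun n => by ring)
  have hcq1 : Tendsto (fun n : ℕ => (((kN n : ℝ) + 3)/2)/n) atTop (nhds (ε/2)) := by
    have h := (hK.div_const 2).add (h0n.const_mul (3/2))
    rw [mul_zero, add_zero] at h
    exact h.congr (fun n => by ring)
  have hcq2 : Tendsto (fun n : ℕ => ((kN n : ℝ)/2)/n) atTop (nhds (ε/2)) := by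
    exact (hK.div_const 2).congr (fun n => by ring)
  have hrateUp :
      Tendsto (fun n : ℕ =>
          -(Real.log ((2*(1-p)) ^ (mT n) * (p/(1-p)) ^ (((mT n : ℝ) + 1)/2)))/n)
        atTop (nhds ((1-ε) * Dhalf p)) :=
    tendsto_rate_U p hp0 hp2 (1-ε) mT (fun n => ((mT n : ℝ) + 1)/2) hm hcp
  have hrateUq1 :
      Tendsto (fun n : ℕ =>
          -(Real.log ((2*(1-q)) ^ (kN n + 1) * (q/(1-q)) ^ (((kN n : ℝ) + 3)/2)))/n)
        atTop (nhds (ε * Dhalf q)) :=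
    tendsto_rate_U q hq0 hq2 ε (fun n => kN n + 1) (fun n => ((kN n : ℝ) + 3)/2) hKp1 hcq1
  have hrateUq2 :
      Tendsto (fun n : ℕ =>
          -(Real.log ((2*(1-q)) ^ (kN n + 1) * (q/(1-q)) ^ ((kN n : ℝ)/2)))/n)
        atTop (nhds (ε * Dhalf q)) :=
    tendsto_rate_U q hq0 hq2 ε (fun n => kN n + 1) (fun n => (kN n : ℝ)/2) hKp1 hcq2
  -- eventual size facts
  have hmT2 : ∀ᶠ n in atTop, 2 ≤ mT n := eventually_seq_ge mT (1-ε) h1ε0 hm 2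
  have hkN2 : ∀ᶠ n in atTop, 2 ≤ kN n := eventually_seq_ge kN ε hε0 hK 2
  -- L-rate limits
  have hkp : Tendsto (fun n : ℕ => (kp n : ℝ)/n) atTop (nhds ((1-ε)/2)) :=
    tendsto_halfdiv mT (1-ε) 1 hm
  have hkq : Tendsto (fun n : ℕ => (kq n : ℝ)/n) atTop (nhds (ε/2)) :=
    tendsto_halfdiv kN ε 2 hK
  have hrateLp :
      Tendsto (fun n : ℕ =>
          -(Real.log (((mT n).choose (kp n) : ℝ) * (p ^ (kp n) * (1-p) ^ (mT n - kp n))))/n)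
        atTop (nhds ((1-ε) * Dhalf p)) := by
    apply tendsto_rate_L p hp0 hp2 (1-ε) h1ε0 mT kp hm hkp
    · filter_upwards [hmT2] with n hn
      simp only [hkpdef]
      omega
    · filter_upwards [hmT2] with n hn
      exact choose_lb (mT n) (kp n) (by simp only [hkpdef]; omega)
        (by simp only [hkpdef]; omega) (by simp only [hkpdef]; omega)
  have hrateLq :
      Tendsto (fun n : ℕ =>
          -(Real.log (((kN n + 1).choose (kq n) : ℝ)
            * (q ^ (kq n) * (1-q) ^ (kN n + 1 - kq n))))/n)
        atTop (nhds (ε * Dhalf q)) := by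
    apply tendsto_rate_L q hq0 hq2 ε hε0 (fun n => kN n + 1) kq hKp1 hkq
    · filter_upwards [hkN2] with n hn
      simp only [hkqdef]
      omega
    · filter_upwards [hkN2] with n hn
      exact choose_lb (kN n + 1) (kq n) (by simp only [hkqdef]; omega)
        (by simp only [hkqdef]; omega) (by simp only [hkqdef]; omega)
  -- sum bounds
  have hcardY : ∀ n, (Finset.Icc 1 (mT n)).card = mT n := by
    intro n; rw [Nat.card_Icc]; omega
  have hcardN : ∀ n : ℕ, (Finset.Icc ⌈(1-ε)*(n:ℝ)⌉₊ n).card = kN n + 1 := by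
    intro n
    have h := ceil_floor_split hε0 hε1 n
    rw [Nat.card_Icc, h.1]
    have := h.2
    simp only [hkNdef]
    omega
  have hSpU : ∀ n, SPf p ε n ≤ (2*(1-p)) ^ (mT n) * (p/(1-p)) ^ (((mT n : ℝ) + 1)/2) := by
    intro n
    have hc := tail_sum_le (Finset.Icc 1 (mT n)) p (((mT n : ℝ) + 1)/2) hp0 hp2 (by positivity)
    calc SPf p ε n ≤ (2*(1-p)) ^ ((Finset.Icc 1 (mT n)).card)
          * (p/(1-p)) ^ (((mT n : ℝ) + 1)/2) := hc
      _ = (2*(1-p)) ^ (mT n) * (p/(1-p)) ^ (((mT n : ℝ) + 1)/2) := by rw [hcardY]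
  have hSq1U : ∀ n, SQ1f q ε n ≤ (2*(1-q)) ^ (kN n + 1) * (q/(1-q)) ^ (((kN n : ℝ) + 3)/2) := by
    intro n
    have hc := tail_sum_le (Finset.Icc ⌈(1-ε)*(n:ℝ)⌉₊ n) q (((kN n : ℝ) + 3)/2) hq0 hq2
      (by positivity)
    calc SQ1f q ε n ≤ (2*(1-q)) ^ ((Finset.Icc ⌈(1-ε)*(n:ℝ)⌉₊ n).card)
          * (q/(1-q)) ^ (((kN n : ℝ) + 3)/2) := hc
      _ = _ := by rw [hcardN]
  have hSq2U : ∀ n, SQ2f q ε n ≤ (2*(1-q)) ^ (kN n + 1) * (q/(1-q)) ^ ((kN n : ℝ)/2) := by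
    intro n
    have hc := tail_sum_le (Finset.Icc ⌈(1-ε)*(n:ℝ)⌉₊ n) q ((kN n : ℝ)/2) hq0 hq2
      (by positivity)
    calc SQ2f q ε n ≤ (2*(1-q)) ^ ((Finset.Icc ⌈(1-ε)*(n:ℝ)⌉₊ n).card)
          * (q/(1-q)) ^ ((kN n : ℝ)/2) := hc
      _ = _ := by rw [hcardN]
  have hSpL : ∀ n, ((mT n).choose (kp n) : ℝ) * (p ^ (kp n) * (1-p) ^ (mT n - kp n))
      ≤ SPf p ε n := by
    intro n
    have hck : ((mT n : ℝ) + 1)/2 ≤ (kp n : ℝ) := by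
      rw [div_le_iff₀ (by norm_num : (0:ℝ) < 2)]
      have h1 : mT n + 1 ≤ 2 * kp n := by simp only [hkpdef]; omega
      have h2 : (mT n : ℝ) + 1 ≤ 2 * (kp n : ℝ) := by exact_mod_cast h1
      linarith
    have hc := tail_sum_ge (Finset.Icc 1 (mT n)) p (((mT n : ℝ) + 1)/2) hp0.le (by linarith)
      (kp n) hck
    calc ((mT n).choose (kp n) : ℝ) * (p ^ (kp n) * (1-p) ^ (mT n - kp n))
        = (((Finset.Icc 1 (mT n)).card).choose (kp n) : ℝ)
          * (p ^ (kp n) * (1-p) ^ ((Finset.Icc 1 (mT n)).card - kp n)) := by rw [hcardY]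
      _ ≤ SPf p ε n := hc
  have hSq1L : ∀ n, ((kN n + 1).choose (kq n) : ℝ) * (q ^ (kq n) * (1-q) ^ (kN n + 1 - kq n))
      ≤ SQ1f q ε n := by
    intro n
    have hck : ((kN n : ℝ) + 3)/2 ≤ (kq n : ℝ) := by
      rw [div_le_iff₀ (by norm_num : (0:ℝ) < 2)]
      have h1 : kN n + 3 ≤ 2 * kq n := by simp only [hkqdef]; omega
      have h2 : (kN n : ℝ) + 3 ≤ 2 * (kq n : ℝ) := by exact_mod_cast h1
      linarith
    have hc := tail_sum_ge (Finset.Icc ⌈(1-ε)*(n:ℝ)⌉₊ n) q (((kN n : ℝ) + 3)/2) hq0.le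
      (by linarith) (kq n) hck
    calc ((kN n + 1).choose (kq n) : ℝ) * (q ^ (kq n) * (1-q) ^ (kN n + 1 - kq n))
        = (((Finset.Icc ⌈(1-ε)*(n:ℝ)⌉₊ n).card).choose (kq n) : ℝ)
          * (q ^ (kq n) * (1-q) ^ ((Finset.Icc ⌈(1-ε)*(n:ℝ)⌉₊ n).card - kq n)) := by rw [hcardN]
      _ ≤ SQ1f q ε n := hc
  -- positivity
  have hUpPos : ∀ n, (0:ℝ) < (2*(1-p)) ^ (mT n) * (p/(1-p)) ^ (((mT n : ℝ) + 1)/2) := by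
    intro n
    have h1 : (0:ℝ) < 2*(1-p) := by linarith
    have h2 : (0:ℝ) < p/(1-p) := by positivity
    positivity
  have hUq1Pos : ∀ n, (0:ℝ) < (2*(1-q)) ^ (kN n + 1) * (q/(1-q)) ^ (((kN n : ℝ) + 3)/2) := by
    intro n
    have h1 : (0:ℝ) < 2*(1-q) := by linarith
    have h2 : (0:ℝ) < q/(1-q) := by positivity
    positivity
  have hUq2Pos : ∀ n, (0:ℝ) < (2*(1-q)) ^ (kN n + 1) * (q/(1-q)) ^ ((kN n : ℝ)/2) := by
    intro n
    have h1 : (0:ℝ) < 2*(1-q) := by linarith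
    have h2 : (0:ℝ) < q/(1-q) := by positivity
    positivity
  have hLpPos : ∀ᶠ n in atTop,
      (0:ℝ) < ((mT n).choose (kp n) : ℝ) * (p ^ (kp n) * (1-p) ^ (mT n - kp n)) := by
    filter_upwards [hmT2] with n hn
    have hc : 0 < (mT n).choose (kp n) := Nat.choose_pos (by simp only [hkpdef]; omega)
    have hc' : (0:ℝ) < ((mT n).choose (kp n) : ℝ) := by exact_mod_cast hc
    positivity
  have hLqPos : ∀ᶠ n in atTop,
      (0:ℝ) < ((kN n + 1).choose (kq n) : ℝ) * (q ^ (kq n) * (1-q) ^ (kN n + 1 - kq n)) := by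
    filter_upwards [hkN2] with n hn
    have hc : 0 < (kN n + 1).choose (kq n) := Nat.choose_pos (by simp only [hkqdef]; omega)
    have hc' : (0:ℝ) < ((kN n + 1).choose (kq n) : ℝ) := by exact_mod_cast hc
    positivity
  -- smallness of Sp and Sq2
  have hUp0 : Tendsto (fun n : ℕ =>
      (2*(1-p)) ^ (mT n) * (p/(1-p)) ^ (((mT n : ℝ) + 1)/2)) atTop (nhds 0) :=
    tendsto_zero_of_rate _ ((1-ε) * Dhalf p) (by positivity)
      (Filter.Eventually.of_forall hUpPos) hrateUp
  have hUq20 : Tendsto (fun n : ℕ =>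
      (2*(1-q)) ^ (kN n + 1) * (q/(1-q)) ^ ((kN n : ℝ)/2)) atTop (nhds 0) :=
    tendsto_zero_of_rate _ (ε * Dhalf q) (by positivity)
      (Filter.Eventually.of_forall hUq2Pos) hrateUq2
  have hSpHalf : ∀ᶠ n in atTop, SPf p ε n ≤ 1/2 := by
    filter_upwards [hUp0.eventually (eventually_le_nhds (by norm_num : (0:ℝ) < 1/2))] with n hn
    exact le_trans (hSpU n) hn
  have hSq2Half : ∀ᶠ n in atTop, SQ2f q ε n ≤ 1/2 := by
    filter_upwards [hUq20.eventually (eventually_le_nhds (by norm_num : (0:ℝ) < 1/2))] with n hn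
    exact le_trans (hSq2U n) hn
  -- error value
  have herr := fun n => err_eq μ p q ⟨hp0, hp2⟩ ⟨hq0, hq2⟩ Y N hYmeas hNmeas hYrange hNrange
    hYdist hNdist hindep ε ⟨hε0, hε1⟩ n
  have hSp0 : ∀ n, 0 ≤ SPf p ε n := fun n => tailSum_nonneg _ _ _ hp0.le (by linarith)
  have hSq10 : ∀ n, 0 ≤ SQ1f q ε n := fun n => tailSum_nonneg _ _ _ hq0.le (by linarith)
  have hSq20 : ∀ n, 0 ≤ SQ2f q ε n := fun n => tailSum_nonneg _ _ _ hq0.le (by linarith)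
  have hE : ∀ n, (μ (epsErr Y N ε n)).toReal
      = (1 - SPf p ε n) * SQ1f q ε n + SPf p ε n * (1 - SQ2f q ε n) := by
    intro n
    obtain ⟨heq, h1, h2, h3⟩ := herr n
    rw [heq, ENNReal.toReal_ofReal]
    have := hSp0 n; have := hSq10 n; have := hSq20 n
    nlinarith
  -- eventual sandwich for E
  have hElow1 : ∀ᶠ n in atTop,
      (1/2) * (((mT n).choose (kp n) : ℝ) * (p ^ (kp n) * (1-p) ^ (mT n - kp n)))
        ≤ (1 - SPf p ε n) * SQ1f q ε n + SPf p ε n * (1 - SQ2f q ε n) := by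
    filter_upwards [hSq2Half, hLpPos] with n hn hLn
    obtain ⟨_, h1, h2, h3⟩ := herr n
    have hSL := hSpL n
    have := hSp0 n; have := hSq10 n; have := hSq20 n
    nlinarith
  have hElow2 : ∀ᶠ n in atTop,
      (1/2) * (((kN n + 1).choose (kq n) : ℝ) * (q ^ (kq n) * (1-q) ^ (kN n + 1 - kq n)))
        ≤ (1 - SPf p ε n) * SQ1f q ε n + SPf p ε n * (1 - SQ2f q ε n) := by
    filter_upwards [hSpHalf, hLqPos] with n hn hLn
    obtain ⟨_, h1, h2, h3⟩ := herr n
    have hSL := hSq1L n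
    have := hSp0 n; have := hSq10 n; have := hSq20 n
    nlinarith
  have hEhigh : ∀ᶠ n in atTop,
      (1 - SPf p ε n) * SQ1f q ε n + SPf p ε n * (1 - SQ2f q ε n)
        ≤ (2*(1-p)) ^ (mT n) * (p/(1-p)) ^ (((mT n : ℝ) + 1)/2)
          + (2*(1-q)) ^ (kN n + 1) * (q/(1-q)) ^ (((kN n : ℝ) + 3)/2) := by
    filter_upwards with n
    obtain ⟨_, h1, h2, h3⟩ := herr n
    have hU1 := hSpU n
    have hU2 := hSq1U n
    have := hSp0 n; have := hSq10 n; have := hSq20 n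
    nlinarith
  -- assemble limits of lower/upper rate functions
  have hlog2n : Tendsto (fun n : ℕ => Real.log 2/n) atTop (nhds 0) := by
    have h := h0n.const_mul (Real.log 2)
    rw [mul_zero] at h
    exact h.congr (fun n => by ring)
  have hlo_t : Tendsto (fun n : ℕ => -(Real.log 2)/n + min
      (-(Real.log ((2*(1-p)) ^ (mT n) * (p/(1-p)) ^ (((mT n : ℝ) + 1)/2)))/n)
      (-(Real.log ((2*(1-q)) ^ (kN n + 1) * (q/(1-q)) ^ (((kN n : ℝ) + 3)/2)))/n))
      atTop (nhds (min ((1-ε) * Dhalf p) (ε * Dhalf q))) := by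
    have hneg : Tendsto (fun n : ℕ => -(Real.log 2)/n) atTop (nhds 0) := by
      have h := h0n.const_mul (-(Real.log 2))
      rw [mul_zero] at h
      exact h.congr (fun n => by ring)
    have h := hneg.add (hrateUp.min hrateUq1)
    rw [zero_add] at h
    exact h
  have hhi_t : Tendsto (fun n : ℕ => Real.log 2/n + min
      (-(Real.log (((mT n).choose (kp n) : ℝ) * (p ^ (kp n) * (1-p) ^ (mT n - kp n))))/n)
      (-(Real.log (((kN n + 1).choose (kq n) : ℝ)
          * (q ^ (kq n) * (1-q) ^ (kN n + 1 - kq n))))/n))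
      atTop (nhds (min ((1-ε) * Dhalf p) (ε * Dhalf q))) := by
    have h := hlog2n.add (hrateLp.min hrateLq)
    rw [zero_add] at h
    exact h
  -- final squeeze
  have hmain : Tendsto (fun n : ℕ =>
      -(Real.log ((1 - SPf p ε n) * SQ1f q ε n + SPf p ε n * (1 - SQ2f q ε n)))/n)
      atTop (nhds (min ((1-ε) * Dhalf p) (ε * Dhalf q))) := by
    refine tendsto_of_tendsto_of_tendsto_of_le_of_le' hlo_t hhi_t ?_ ?_
    · filter_upwards [hElow1, hEhigh, hLpPos, eventually_gt_atTop 0] with n h1 h2 hLp hn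
      apply sandwich_lower _ _ _ (hUpPos n) (hUq1Pos n) _ h2 n hn
      calc (0:ℝ) < (1/2) * (((mT n).choose (kp n) : ℝ)
            * (p ^ (kp n) * (1-p) ^ (mT n - kp n))) := by linarith
        _ ≤ _ := h1
    · filter_upwards [hElow1, hElow2, hLpPos, hLqPos, eventually_gt_atTop 0]
        with n h1 h2 hLp hLq hn
      exact sandwich_upper _ _ _ hLp hLq h1 h2 n hn
  exact hmain.congr (fun n => by rw [hE n])
end Part1Final


/-- For each fixed `ε ∈ (0,1)`, the ε-teaching strategy has learning rate
`min((1−ε)D(1/2‖p), ε·D(1/2‖q))`; consequently the rate optimized over `ε ∈ (0,1)` equals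
`D(1/2‖p)·D(1/2‖q)/(D(1/2‖p)+D(1/2‖q))`, attained at `ε = D(1/2‖p)/(D(1/2‖p)+D(1/2‖q))`. -/
theorem stmt7
    (μ : Measure Ω) [IsProbabilityMeasure μ]
    (p q : ℝ) (hp : p ∈ Set.Ioo (0:ℝ) (1/2)) (hq : q ∈ Set.Ioo (0:ℝ) (1/2))
    (Y N : ℕ → Ω → ℤ)
    (hYmeas : ∀ i, Measurable (Y i)) (hNmeas : ∀ i, Measurable (N i))
    (hYrange : ∀ i ω, Y i ω = 1 ∨ Y i ω = -1)
    (hNrange : ∀ i ω, N i ω = 1 ∨ N i ω = -1)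
    (hYdist : ∀ i, μ {ω | Y i ω = 1} = ENNReal.ofReal (1 - p))
    (hNdist : ∀ i, μ {ω | N i ω = -1} = ENNReal.ofReal q)
    (hindep : iIndepFun (m := fun _ => (inferInstance : MeasurableSpace ℤ)) (Sum.elim Y N) μ) :
    (∀ ε ∈ Set.Ioo (0:ℝ) 1,
      Tendsto (fun n : ℕ => -(Real.log ((μ (epsErr Y N ε n)).toReal)) / (n : ℝ))
        atTop (nhds (min ((1-ε) * Dhalf p) (ε * Dhalf q)))) ∧
    IsGreatest ((fun ε => min ((1-ε) * Dhalf p) (ε * Dhalf q)) '' Set.Ioo (0:ℝ) 1)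
      (Dhalf p * Dhalf q / (Dhalf p + Dhalf q)) ∧
    min ((1 - Dhalf p / (Dhalf p + Dhalf q)) * Dhalf p)
        ((Dhalf p / (Dhalf p + Dhalf q)) * Dhalf q)
      = Dhalf p * Dhalf q / (Dhalf p + Dhalf q) := by
  have hDp := Dhalf_pos hp.1 hp.2
  have hDq := Dhalf_pos hq.1 hq.2
  have hs : 0 < Dhalf p + Dhalf q := by linarith
  have hpart3 : min ((1 - Dhalf p / (Dhalf p + Dhalf q)) * Dhalf p)
      ((Dhalf p / (Dhalf p + Dhalf q)) * Dhalf q)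
      = Dhalf p * Dhalf q / (Dhalf p + Dhalf q) := by
    have h1 : (1 - Dhalf p / (Dhalf p + Dhalf q)) * Dhalf p
        = Dhalf p * Dhalf q / (Dhalf p + Dhalf q) := by
      field_simp
      ring
    have h2 : (Dhalf p / (Dhalf p + Dhalf q)) * Dhalf q
        = Dhalf p * Dhalf q / (Dhalf p + Dhalf q) := by
      field_simp
    rw [h1, h2, min_self]
  refine ⟨fun ε hε => part1 μ p q hp hq Y N hYmeas hNmeas hYrange hNrange hYdist hNdist
    hindep ε hε, ⟨?_, ?_⟩, hpart3⟩
  · -- membership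
    refine ⟨Dhalf p / (Dhalf p + Dhalf q), ⟨div_pos hDp hs, (div_lt_one hs).2 (by linarith)⟩, ?_⟩
    exact hpart3
  · -- upper bound
    rintro x ⟨ε, ⟨hε0, hε1⟩, rfl⟩
    rcases le_total ε (Dhalf p / (Dhalf p + Dhalf q)) with h | h
    · refine le_trans (min_le_right _ _) ?_
      calc ε * Dhalf q ≤ (Dhalf p / (Dhalf p + Dhalf q)) * Dhalf q :=
          mul_le_mul_of_nonneg_right h hDq.le
        _ = Dhalf p * Dhalf q / (Dhalf p + Dhalf q) := by field_simp
    · refine le_trans (min_le_left _ _) ?_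
      calc (1-ε) * Dhalf p ≤ (1 - Dhalf p / (Dhalf p + Dhalf q)) * Dhalf p :=
          mul_le_mul_of_nonneg_right (by linarith) hDp.le
        _ = Dhalf p * Dhalf q / (Dhalf p + Dhalf q) := by field_simp; ring
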